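/- Let K ≥ 1, let p ∈ [0,1] be such that p·2^K is an integer, and let F^fixed_{K,p} be the uniform distribution on the set of Boolean functions f : 𝔽₂^K → 𝔽₂ whose truth table has Hamming weight exactly p·2^K. Then for every a ∈ [0,1], Lynch's parameter λ = Σ_f P(F^fixed_{K,p} = f) Σ_{w ∈ 𝔽₂^K} s_f(w) · a^(wH(w)) · (1−a)^(K − wH(w)) satisfies λ = 2^(K+1)·K·p·(1−p) / (2^K − 1). -/

import Mathlib

open Finset

/-- Boolean vectors of length `K`, modelling `𝔽₂^K`. -/
abbrev BVec (K : ℕ) := Fin K → Bool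

/-- Flip the `i`-th coordinate of `w`, i.e. `w ⊕ eᵢ`. -/
def flipCoord {K : ℕ} (w : BVec K) (i : Fin K) : BVec K :=
  Function.update w i (!(w i))

/-- The sensitivity `s_f(w)`: the number of coordinates `i` with `f(w) ≠ f(w ⊕ eᵢ)`. -/
def sens {K : ℕ} (f : BVec K → Bool) (w : BVec K) : ℕ :=
  (univ.filter (fun i : Fin K => f w ≠ f (flipCoord w i))).card

/-- The average sensitivity `s(f) = 2⁻ᴷ Σ_w s_f(w)`. -/
noncomputable def avgSens {K : ℕ} (f : BVec K → Bool) : ℝ :=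
  (2 ^ K : ℝ)⁻¹ * ∑ w : BVec K, (sens f w : ℝ)

/-- The Hamming weight of the truth table of `f`. -/
def wt {K : ℕ} (f : BVec K → Bool) : ℕ :=
  (univ.filter (fun w : BVec K => f w = true)).card

/-- Hamming weight of a Boolean vector. -/
def hw {K : ℕ} (w : BVec K) : ℕ :=
  (univ.filter (fun i : Fin K => w i = true)).card

/-- Interpret a Boolean value as a real number. -/
def b2r (b : Bool) : ℝ := if b then 1 else 0

/-- Bernoulli(`p`) product weight of a Boolean function: each of the `2^K` truth-table
entries is independently `1` with probability `p`. -/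
noncomputable def bernP {K : ℕ} (p : ℝ) (f : BVec K → Bool) : ℝ :=
  p ^ wt f * (1 - p) ^ (2 ^ K - wt f)

/-- `s^(l)(f,w)`: number of `x` with Hamming weight `l` such that `f(w) ≠ f(w ⊕ x)`. -/
def sensOrd {K : ℕ} (f : BVec K → Bool) (l : ℕ) (w : BVec K) : ℕ :=
  (univ.filter (fun x : BVec K => hw x = l ∧ f w ≠ f (fun i => xor (w i) (x i)))).card

/-- Average sensitivity of order `l`. -/
noncomputable def avgSensOrd {K : ℕ} (f : BVec K → Bool) (l : ℕ) : ℝ :=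
  (2 ^ K : ℝ)⁻¹ * ∑ w : BVec K, (sensOrd f l w : ℝ)

section LynchAux

variable {K : ℕ}

lemma card_univ_bvec (K : ℕ) : Fintype.card (BVec K) = 2 ^ K := by
  simp [Fintype.card_fun]

lemma wt_le (f : BVec K → Bool) : wt f ≤ 2 ^ K := by
  calc wt f ≤ (univ : Finset (BVec K)).card := Finset.card_filter_le _ _
    _ = 2 ^ K := by rw [Finset.card_univ, card_univ_bvec]

lemma card_filter_false (f : BVec K → Bool) :
    (univ.filter (fun w : BVec K => f w = false)).card = 2 ^ K - wt f := by
  have h := Finset.card_filter_add_card_filter_not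
    (s := (univ : Finset (BVec K))) (p := fun w => f w = true)
  have h2 : (univ.filter (fun w : BVec K => ¬ f w = true))
      = univ.filter (fun w : BVec K => f w = false) := by
    apply Finset.filter_congr; intro w _; simp
  have hwdef : (univ.filter (fun w : BVec K => f w = true)).card = wt f := rfl
  rw [h2, hwdef, Finset.card_univ, card_univ_bvec] at h
  omega

lemma wt_comp_perm (f : BVec K → Bool) (σ : Equiv.Perm (BVec K)) :
    wt (f ∘ σ) = wt f := by
  unfold wt
  apply Finset.card_nbij' (fun w => σ w) (fun w => σ.symm w)
  · intro w hw
    simp only [Finset.mem_coe, Finset.mem_filter, Finset.mem_univ, true_and, Function.comp_apply] at hw ⊢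
    exact hw
  · intro w hw
    simp only [Finset.mem_coe, Finset.mem_filter, Finset.mem_univ, true_and, Function.comp_apply] at hw ⊢
    simpa using hw
  · intro w _; simp
  · intro w _; simp

/-- Number of weight-`t` functions with `f u = 1`, `f v = 0`. -/
def cnt (K t : ℕ) (u v : BVec K) : ℕ :=
  ((univ : Finset (BVec K → Bool)).filter
    (fun f => wt f = t ∧ f u = true ∧ f v = false)).card

lemma cnt_const (t : ℕ) {u v u' v' : BVec K} (huv : u ≠ v) (huv' : u' ≠ v') :
    cnt K t u v = cnt K t u' v' := by
  classical
  set σ1 := Equiv.swap u u' with hσ1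
  have hσ1u : σ1 u = u' := Equiv.swap_apply_left u u'
  have hne1 : u' ≠ σ1 v := fun h => huv (σ1.injective (hσ1u.trans h))
  set σ := σ1.trans (Equiv.swap (σ1 v) v') with hσdef
  have hσu : σ u = u' := by
    simp only [hσdef, Equiv.trans_apply, hσ1u]
    exact Equiv.swap_apply_of_ne_of_ne hne1 huv'
  have hσv : σ v = v' := by
    simp only [hσdef, Equiv.trans_apply]
    exact Equiv.swap_apply_left _ _
  have hsu : σ.symm u' = u := by rw [← hσu]; simp
  have hsv : σ.symm v' = v := by rw [← hσv]; simp
  unfold cnt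
  apply Finset.card_nbij' (fun f => f ∘ σ.symm) (fun f => f ∘ σ)
  · intro f hf
    simp only [Finset.mem_coe, Finset.mem_filter, Finset.mem_univ, true_and, Function.comp_apply] at hf ⊢
    refine ⟨(wt_comp_perm f σ.symm).trans hf.1, ?_, ?_⟩
    · rw [hsu]; exact hf.2.1
    · rw [hsv]; exact hf.2.2
  · intro f hf
    simp only [Finset.mem_coe, Finset.mem_filter, Finset.mem_univ, true_and, Function.comp_apply] at hf ⊢
    refine ⟨(wt_comp_perm f σ).trans hf.1, ?_, ?_⟩
    · rw [hσu]; exact hf.2.1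
    · rw [hσv]; exact hf.2.2
  · intro f _; funext w; simp
  · intro f _; funext w; simp

lemma card_ne_split (t : ℕ) (u v : BVec K) :
    ((univ : Finset (BVec K → Bool)).filter (fun f => wt f = t ∧ f u ≠ f v)).card
      = cnt K t u v + cnt K t v u := by
  classical
  unfold cnt
  rw [← Finset.card_union_of_disjoint]
  · congr 1
    ext f
    simp only [Finset.mem_union, Finset.mem_filter, Finset.mem_univ, true_and]
    constructor
    · rintro ⟨hwt, hne⟩
      cases h1 : f u <;> cases h2 : f v <;> simp_all
    · rintro (⟨hwt, h1, h2⟩ | ⟨hwt, h1, h2⟩) <;> refine ⟨hwt, ?_⟩ <;> simp [h1, h2]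
  · rw [Finset.disjoint_left]
    rintro f hf hg
    simp only [Finset.mem_filter] at hf hg
    rw [hf.2.2.1] at hg
    simp at hg

lemma cnt_eq_sum (t : ℕ) (u v : BVec K) :
    cnt K t u v = ∑ f ∈ (univ : Finset (BVec K → Bool)).filter (fun f => wt f = t),
      (if f u = true ∧ f v = false then 1 else 0) := by
  unfold cnt
  rw [← Finset.filter_filter, Finset.card_filter]

lemma double_count (K t : ℕ) :
    ∑ q ∈ (univ : Finset (BVec K)).offDiag, cnt K t q.1 q.2
      = ((univ : Finset (BVec K → Bool)).filter (fun f => wt f = t)).card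
          * (t * (2 ^ K - t)) := by
  classical
  have key : ∀ f : BVec K → Bool, wt f = t →
      (∑ q ∈ (univ : Finset (BVec K)).offDiag,
        (if f q.1 = true ∧ f q.2 = false then 1 else 0)) = t * (2 ^ K - t) := by
    intro f hf
    rw [← Finset.card_filter]
    have hset : (univ : Finset (BVec K)).offDiag.filter
          (fun q => f q.1 = true ∧ f q.2 = false)
        = (univ.filter (fun w : BVec K => f w = true))
            ×ˢ (univ.filter (fun w : BVec K => f w = false)) := by
      ext q
      simp only [Finset.mem_filter, Finset.mem_offDiag, Finset.mem_product, Finset.mem_univ,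
        true_and]
      constructor
      · rintro ⟨-, h1, h2⟩; exact ⟨h1, h2⟩
      · rintro ⟨h1, h2⟩
        refine ⟨?_, h1, h2⟩
        intro h; rw [h, h2] at h1; exact Bool.noConfusion h1
    rw [hset, Finset.card_product, card_filter_false]
    have hwdef : (univ.filter (fun w : BVec K => f w = true)).card = wt f := rfl
    rw [hwdef, hf]
  calc ∑ q ∈ (univ : Finset (BVec K)).offDiag, cnt K t q.1 q.2
      = ∑ q ∈ (univ : Finset (BVec K)).offDiag,
          ∑ f ∈ (univ : Finset (BVec K → Bool)).filter (fun f => wt f = t),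
            (if f q.1 = true ∧ f q.2 = false then 1 else 0) :=
        Finset.sum_congr rfl (fun q _ => cnt_eq_sum t q.1 q.2)
    _ = ∑ f ∈ (univ : Finset (BVec K → Bool)).filter (fun f => wt f = t),
          ∑ q ∈ (univ : Finset (BVec K)).offDiag,
            (if f q.1 = true ∧ f q.2 = false then 1 else 0) := Finset.sum_comm
    _ = ∑ f ∈ (univ : Finset (BVec K → Bool)).filter (fun f => wt f = t),
          t * (2 ^ K - t) :=
        Finset.sum_congr rfl (fun f hf => key f (Finset.mem_filter.mp hf).2)
    _ = _ := by rw [Finset.sum_const, smul_eq_mul]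

lemma sum_offDiag_cnt (K t : ℕ) {u v : BVec K} (huv : u ≠ v) :
    ∑ q ∈ (univ : Finset (BVec K)).offDiag, cnt K t q.1 q.2
      = (2 ^ K * 2 ^ K - 2 ^ K) * cnt K t u v := by
  rw [Finset.sum_congr rfl
    (fun q hq => cnt_const t (Finset.mem_offDiag.mp hq).2.2 huv)]
  rw [Finset.sum_const, smul_eq_mul, Finset.offDiag_card, Finset.card_univ, card_univ_bvec]

set_option maxHeartbeats 1000000 in
lemma sum_weight (K : ℕ) (a : ℝ) :
    ∑ w : BVec K, a ^ hw w * (1 - a) ^ (K - hw w) = 1 := by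
  classical
  have h1 : ∀ w : BVec K, a ^ hw w * (1 - a) ^ (K - hw w)
      = ∏ i : Fin K, (if w i = true then a else 1 - a) := by
    intro w
    have hwdef : (univ.filter (fun i : Fin K => w i = true)).card = hw w := rfl
    have hc : (univ.filter (fun i : Fin K => ¬ w i = true)).card = K - hw w := by
      have h := Finset.card_filter_add_card_filter_not
        (s := (univ : Finset (Fin K))) (p := fun i => w i = true)
      rw [hwdef, Finset.card_univ, Fintype.card_fin] at h
      omega
    rw [Finset.prod_ite, Finset.prod_const, Finset.prod_const, hc, hwdef]
  calc ∑ w : BVec K, a ^ hw w * (1 - a) ^ (K - hw w)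
      = ∑ w : BVec K, ∏ i : Fin K, (if w i = true then a else 1 - a) :=
        Finset.sum_congr rfl (fun w _ => h1 w)
    _ = ∏ i : Fin K, ∑ b : Bool, (if b = true then a else 1 - a) :=
        (Fintype.prod_sum (κ := fun _ : Fin K => Bool)
          (fun _ b => if b = true then a else 1 - a)).symm
    _ = ∏ i : Fin K, (1 : ℝ) := by
        refine Finset.prod_congr rfl (fun i _ => ?_)
        rw [Fintype.sum_bool]; norm_num
    _ = 1 := Finset.prod_const_one

lemma exists_wt (K t : ℕ) (htle : t ≤ 2 ^ K) : ∃ f : BVec K → Bool, wt f = t := by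
  classical
  obtain ⟨S, -, hS⟩ := Finset.exists_subset_card_eq
    (s := (univ : Finset (BVec K))) (n := t)
    (by rw [Finset.card_univ, card_univ_bvec]; exact htle)
  refine ⟨fun w => decide (w ∈ S), ?_⟩
  unfold wt
  rw [← hS]
  congr 1
  ext w
  simp

lemma flip_ne (w : BVec K) (i : Fin K) : w ≠ flipCoord w i := by
  intro h
  have := congrFun h i
  simp only [flipCoord, Function.update_self] at this
  cases hwi : w i <;> rw [hwi] at this <;> simp_all

end LynchAux

theorem lynch_lambda_fixedBias (K : ℕ) (hK : 1 ≤ K) (p : ℝ)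
    (hp0 : 0 ≤ p) (hp1 : p ≤ 1) (t : ℕ) (ht : (t : ℝ) = p * 2 ^ K)
    (a : ℝ) (ha0 : 0 ≤ a) (ha1 : a ≤ 1) :
    (∑ f ∈ univ.filter (fun f : BVec K → Bool => wt f = t),
        ∑ w : BVec K, (sens f w : ℝ) * a ^ hw w * (1 - a) ^ (K - hw w))
      / ((univ.filter (fun f : BVec K → Bool => wt f = t)).card : ℝ)
      = 2 ^ (K + 1) * K * p * (1 - p) / ((2 : ℝ) ^ K - 1) := by
  classical
  set N := (univ : Finset (BVec K → Bool)).filter (fun f => wt f = t) with hN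
  have h2pos : (0:ℕ) < 2 ^ K := by positivity
  have h2K2 : (2:ℕ) ≤ 2 ^ K := by
    calc (2:ℕ) = 2 ^ 1 := rfl
      _ ≤ 2 ^ K := Nat.pow_le_pow_right (by norm_num) hK
  have hXR : ((2:ℝ)) ^ K = ((2 ^ K : ℕ) : ℝ) := by push_cast; ring
  have htle : t ≤ 2 ^ K := by
    have h1 : (t:ℝ) ≤ (2:ℝ) ^ K := by
      rw [ht]
      have := mul_le_mul_of_nonneg_right hp1 (le_of_lt (by positivity : (0:ℝ) < 2 ^ K))
      simpa using this
    rw [hXR] at h1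
    exact_mod_cast h1
  -- base pair
  set i₀ : Fin K := ⟨0, hK⟩ with hi₀
  set u₀ : BVec K := fun _ => false with hu₀
  set v₀ : BVec K := flipCoord u₀ i₀ with hv₀
  have huv : u₀ ≠ v₀ := flip_ne u₀ i₀
  set c : ℕ := cnt K t u₀ v₀ with hc
  -- nonemptiness
  have hNne : N.Nonempty := by
    obtain ⟨f, hf⟩ := exists_wt K t htle
    exact ⟨f, by simp [hN, hf]⟩
  have hNcard : (0:ℝ) < (N.card : ℝ) := by exact_mod_cast Finset.card_pos.mpr hNne
  -- key counting identity
  have keyNat : (2 ^ K * 2 ^ K - 2 ^ K) * c = N.card * (t * (2 ^ K - t)) :=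
    (sum_offDiag_cnt K t huv).symm.trans (double_count K t)
  have hle : 2 ^ K ≤ 2 ^ K * 2 ^ K := Nat.le_mul_of_pos_left _ h2pos
  have keyR : ((2:ℝ) ^ K * (2:ℝ) ^ K - (2:ℝ) ^ K) * (c:ℝ)
      = (N.card : ℝ) * ((t:ℝ) * ((2:ℝ) ^ K - (t:ℝ))) := by
    have hcast := congrArg (fun n : ℕ => (n : ℝ)) keyNat
    push_cast [Nat.cast_sub htle, Nat.cast_sub hle] at hcast
    linarith [hcast]
  -- per-point sensitivity sum
  have sens_sum : ∀ w : BVec K, ∑ f ∈ N, sens f w = 2 * K * c := by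
    intro w
    have hsens : ∀ f : BVec K → Bool,
        sens f w = ∑ i : Fin K, (if f w ≠ f (flipCoord w i) then 1 else 0) := by
      intro f
      rw [sens, Finset.card_filter]
    rw [Finset.sum_congr rfl (fun f _ => hsens f), Finset.sum_comm]
    have hterm : ∀ i : Fin K,
        ∑ f ∈ N, (if f w ≠ f (flipCoord w i) then 1 else 0) = 2 * c := by
      intro i
      have h1 : ∑ f ∈ N, (if f w ≠ f (flipCoord w i) then 1 else 0)
          = ((univ : Finset (BVec K → Bool)).filter
              (fun f => wt f = t ∧ f w ≠ f (flipCoord w i))).card := by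
        rw [hN, ← Finset.filter_filter, Finset.card_filter]
      rw [h1, card_ne_split t w (flipCoord w i),
        cnt_const t (flip_ne w i) huv, cnt_const t (flip_ne w i).symm huv]
      exact (two_mul _).symm
    rw [Finset.sum_congr rfl (fun i _ => hterm i), Finset.sum_const, Finset.card_univ,
      Fintype.card_fin, smul_eq_mul]
    ring
  -- numerator
  have num : (∑ f ∈ N, ∑ w : BVec K,
        (sens f w : ℝ) * a ^ hw w * (1 - a) ^ (K - hw w))
      = 2 * (K:ℝ) * (c:ℝ) := by
    rw [Finset.sum_comm]
    have hw' : ∀ w : BVec K,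
        ∑ f ∈ N, (sens f w : ℝ) * a ^ hw w * (1 - a) ^ (K - hw w)
          = (2 * (K:ℝ) * (c:ℝ)) * (a ^ hw w * (1 - a) ^ (K - hw w)) := by
      intro w
      calc ∑ f ∈ N, (sens f w : ℝ) * a ^ hw w * (1 - a) ^ (K - hw w)
          = (∑ f ∈ N, (sens f w : ℝ)) * (a ^ hw w * (1 - a) ^ (K - hw w)) := by
            rw [Finset.sum_mul]
            exact Finset.sum_congr rfl (fun f _ => by ring)
        _ = _ := by
            rw [← Nat.cast_sum, sens_sum w]
            push_cast
            ring
    rw [Finset.sum_congr rfl (fun w _ => hw' w), ← Finset.mul_sum, sum_weight K a, mul_one]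
  -- final algebra
  have hX1 : (1:ℝ) < (2:ℝ) ^ K := by
    rw [hXR]; exact_mod_cast h2K2.trans_lt' (by norm_num)
  rw [num, div_eq_div_iff (ne_of_gt hNcard) (by linarith : ((2:ℝ) ^ K - 1) ≠ 0)]
  have key2 : ((2:ℝ) ^ K - 1) * (c:ℝ) = (N.card : ℝ) * (p * (1 - p) * 2 ^ K) := by
    apply mul_left_cancel₀ (by positivity : ((2:ℝ) ^ K) ≠ 0)
    calc (2:ℝ) ^ K * (((2:ℝ) ^ K - 1) * (c:ℝ))
        = ((2:ℝ) ^ K * (2:ℝ) ^ K - (2:ℝ) ^ K) * (c:ℝ) := by ring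
      _ = (N.card : ℝ) * ((t:ℝ) * ((2:ℝ) ^ K - (t:ℝ))) := keyR
      _ = (2:ℝ) ^ K * ((N.card : ℝ) * (p * (1 - p) * 2 ^ K)) := by rw [ht]; ring
  linear_combination 2 * (K:ℝ) * key2
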